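/- arXiv:2204.07858 — 6 statements merged into one kernel-verified Lean document; each statement's English description precedes it below -/
import Mathlib

section
/- Let n ≥ 4 be an even integer and q a nonzero complex number. If complex numbers a_0, a_1, …, a_n, b satisfy Σ_{i=0}^{n} a_i·z_2(p)^i + b·z_1(p) = 0 for every critical point p of W_0, then a_0 = a_1 = ⋯ = a_n = b = 0. -/
open Finset

/-- One-based access to the coordinates of a point `z ∈ ℂⁿ`: `zc n z j = z_j` for
`1 ≤ j ≤ n` (and `0` for out-of-range indices, which are never used). -/
noncomputable def zc (n : ℕ) (z : Fin n → ℂ) (j : ℕ) : ℂ :=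
  if h : 1 ≤ j ∧ j ≤ n then z ⟨j - 1, by omega⟩ else 0

/-- The mirror Landau–Ginzburg potential of the quadric `Qⁿ`:
`W₀(z) = q z₁² z_n/(z₁⋯z_n − 1) + z₂ + ∑_{i=2}^{n−1} z_i z_{i+1}`,
defined on `Zⁿ = {z ∈ ℂⁿ : z₁⋯z_n ≠ 1}`. -/
noncomputable def W0 (n : ℕ) (q : ℂ) (z : Fin n → ℂ) : ℂ :=
  q * (zc n z 1) ^ 2 * zc n z n / ((∏ j, z j) - 1)
    + zc n z 2 + ∑ i ∈ Finset.Icc 2 (n - 1), zc n z i * zc n z (i + 1)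

/-- `z` is a critical point of `W₀` in `Zⁿ`: `z₁⋯z_n ≠ 1` and all `n` partial derivatives
`∂W₀/∂z_j` vanish at `z`. -/
def IsCritPt (n : ℕ) (q : ℂ) (z : Fin n → ℂ) : Prop :=
  (∏ j, z j) ≠ 1 ∧
    ∀ j : Fin n, deriv (fun t => W0 n q (Function.update z j t)) (z j) = 0

/-- Membership in `V(I₁)`: `z_{2i+1} = 1` for `1 ≤ i ≤ n/2−1`, `z_{2i} = z_n` for
`1 ≤ i ≤ n/2`, `q z₁² = 1`, and `z₁ z_n^{n/2} = 2`. -/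
def MemV1 (n : ℕ) (q : ℂ) (z : Fin n → ℂ) : Prop :=
  (∀ i : ℕ, 1 ≤ i → i ≤ n / 2 - 1 → zc n z (2 * i + 1) = 1) ∧
    (∀ i : ℕ, 1 ≤ i → i ≤ n / 2 → zc n z (2 * i) = zc n z n) ∧
    q * (zc n z 1) ^ 2 = 1 ∧ zc n z 1 * (zc n z n) ^ (n / 2) = 2

/-- Membership in `V(I₂)`: `z_{2i+1} = (−1)^i` for `1 ≤ i ≤ n/2−1`, `z_{2i} = 0` for
`1 ≤ i ≤ n/2`, and `q z₁² = (−1)^{(n−2)/2}`. -/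
def MemV2 (n : ℕ) (q : ℂ) (z : Fin n → ℂ) : Prop :=
  (∀ i : ℕ, 1 ≤ i → i ≤ n / 2 - 1 → zc n z (2 * i + 1) = (-1 : ℂ) ^ i) ∧
    (∀ i : ℕ, 1 ≤ i → i ≤ n / 2 → zc n z (2 * i) = 0) ∧
    q * (zc n z 1) ^ 2 = (-1 : ℂ) ^ ((n - 2) / 2)

namespace QMaux

lemma zc_def (n : ℕ) (z : Fin n → ℂ) (k : ℕ) (h1 : 1 ≤ k) (h2 : k ≤ n) :
    zc n z k = z ⟨k - 1, by omega⟩ := dif_pos ⟨h1, h2⟩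

lemma zc_update (n : ℕ) (z : Fin n → ℂ) (j : Fin n) (t : ℂ) (k : ℕ)
    (h1 : 1 ≤ k) (h2 : k ≤ n) :
    zc n (Function.update z j t) k = if k = j.val + 1 then t else zc n z k := by
  rw [zc_def n _ k h1 h2, Function.update_apply]
  by_cases hk : k = j.val + 1
  · rw [if_pos (Fin.ext (by simp only [Fin.val_mk]; omega)), if_pos hk]
  · rw [if_neg, if_neg hk, zc_def n z k h1 h2]
    intro hc
    have := Fin.ext_iff.mp hc
    simp only [Fin.val_mk] at this
    omega

noncomputable def ptV1 (n : ℕ) (x y : ℂ) : Fin n → ℂ :=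
  fun j => if j.val = 0 then x else if j.val % 2 = 1 then y else 1

noncomputable def ptV2 (n : ℕ) (x : ℂ) : Fin n → ℂ :=
  fun j => if j.val = 0 then x else if j.val % 2 = 1 then 0 else (-1 : ℂ) ^ (j.val / 2)

lemma zc_ptV1 (n : ℕ) (x y : ℂ) (k : ℕ) (h1 : 1 ≤ k) (h2 : k ≤ n) :
    zc n (ptV1 n x y) k = if k = 1 then x else if k % 2 = 0 then y else 1 := by
  rw [zc_def n _ k h1 h2]
  show (if k - 1 = 0 then x else if (k - 1) % 2 = 1 then y else 1) = _
  by_cases e1 : k = 1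
  · rw [if_pos (by omega), if_pos e1]
  · rw [if_neg (by omega), if_neg e1]
    by_cases e2 : k % 2 = 0
    · rw [if_pos (by omega), if_pos e2]
    · rw [if_neg (by omega), if_neg e2]

lemma zc_ptV2 (n : ℕ) (x : ℂ) (k : ℕ) (h1 : 1 ≤ k) (h2 : k ≤ n) :
    zc n (ptV2 n x) k
      = if k = 1 then x else if k % 2 = 0 then 0 else (-1 : ℂ) ^ ((k - 1) / 2) := by
  rw [zc_def n _ k h1 h2]
  show (if k - 1 = 0 then x else if (k - 1) % 2 = 1 then 0 else (-1 : ℂ) ^ ((k - 1) / 2)) = _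
  by_cases e1 : k = 1
  · rw [if_pos (by omega), if_pos e1]
  · rw [if_neg (by omega), if_neg e1]
    by_cases e2 : k % 2 = 0
    · rw [if_pos (by omega), if_pos e2]
    · rw [if_neg (by omega), if_neg e2]

lemma sum_two_special {s : Finset ℕ} (f : ℕ → ℂ) {i j : ℕ} (hi : i ∈ s) (hj : j ∈ s)
    (hij : i ≠ j) (h0 : ∀ k ∈ s, k ≠ i → k ≠ j → f k = 0) :
    ∑ k ∈ s, f k = f i + f j := by
  rw [← Finset.add_sum_erase s f hi,
    ← Finset.add_sum_erase _ f (Finset.mem_erase.mpr ⟨fun h => hij h.symm, hj⟩)]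
  rw [Finset.sum_eq_zero, add_zero]
  intro k hk
  rw [Finset.mem_erase] at hk
  obtain ⟨hkj, hk⟩ := hk
  rw [Finset.mem_erase] at hk
  exact h0 k hk.2 hk.1 hkj

lemma deriv_aux (A c β γ t0 : ℂ) (e : ℕ) (h : c * t0 - 1 ≠ 0) :
    deriv (fun t => A * t ^ e / (c * t - 1) + (β * t + γ)) t0
      = (A * (e * t0 ^ (e - 1)) * (c * t0 - 1) - A * t0 ^ e * c) / (c * t0 - 1) ^ 2 + β := by
  have h1 : HasDerivAt (fun t : ℂ => A * t ^ e) (A * (e * t0 ^ (e - 1))) t0 :=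
    (hasDerivAt_pow e t0).const_mul A
  have h2 : HasDerivAt (fun t : ℂ => c * t - 1) c t0 := by
    simpa using ((hasDerivAt_id t0).const_mul c).sub_const 1
  have h3 := h1.div h2 h
  have h4 : HasDerivAt (fun t : ℂ => β * t + γ) β t0 := by
    simpa using ((hasDerivAt_id t0).const_mul β).add_const γ
  exact (h3.add h4).deriv

lemma prod_range_V1 (x y : ℂ) (m : ℕ) :
    ∏ i ∈ Finset.range (2 * m + 2), (if i = 0 then x else if i % 2 = 1 then y else (1:ℂ))
      = x * y ^ (m + 1) := by
  induction m with
  | zero => norm_num [Finset.prod_range_succ]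
  | succ k ih =>
    have h : 2 * (k + 1) + 2 = (2 * k + 2) + 1 + 1 := by ring
    rw [h, Finset.prod_range_succ, Finset.prod_range_succ, ih]
    rw [if_neg (by omega), if_neg (by omega), if_neg (by omega), if_pos (by omega)]
    ring

lemma prod_ptV1 (n : ℕ) (hn : 2 ≤ n) (hev : Even n) (x y : ℂ) :
    ∏ j, ptV1 n x y j = x * y ^ (n / 2) := by
  obtain ⟨m, hm⟩ : ∃ m, n = 2 * m + 2 := by
    obtain ⟨k, hk⟩ := hev; exact ⟨k - 1, by omega⟩
  subst hm
  have := prod_range_V1 x y m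
  rw [show (2*m+2)/2 = m + 1 by omega]
  rw [← this, ← Fin.prod_univ_eq_prod_range
    (fun i => if i = 0 then x else if i % 2 = 1 then y else (1:ℂ)) (2*m+2)]
  rfl

lemma prod_ptV2 (n : ℕ) (hn : 2 ≤ n) (x : ℂ) : ∏ j, ptV2 n x j = 0 :=
  Finset.prod_eq_zero (Finset.mem_univ (⟨1, by omega⟩ : Fin n))
    (by norm_num [ptV2])

lemma prod_update_ptV2 (n : ℕ) (hn : 4 ≤ n) (x t : ℂ) (j : Fin n) :
    ∏ i, Function.update (ptV2 n x) j t i = 0 := by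
  by_cases hj : j.val = 1
  · refine Finset.prod_eq_zero (Finset.mem_univ (⟨3, by omega⟩ : Fin n)) ?_
    rw [Function.update_of_ne (by simp [Fin.ext_iff]; omega)]
    norm_num [ptV2]
  · refine Finset.prod_eq_zero (Finset.mem_univ (⟨1, by omega⟩ : Fin n)) ?_
    rw [Function.update_of_ne (by simp [Fin.ext_iff]; omega)]
    norm_num [ptV2]

lemma W0_update_ptV2 (n : ℕ) (hn : 4 ≤ n) (hev : Even n) (q x : ℂ)
    (hx : q * x ^ 2 = (-1 : ℂ) ^ ((n - 2) / 2)) (j : Fin n) (t : ℂ) :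
    W0 n q (Function.update (ptV2 n x) j t) = 0 := by
  set z := ptV2 n x with hz
  have hlt : j.val < n := j.isLt
  have hwk : ∀ k, 1 ≤ k → k ≤ n → zc n (Function.update z j t) k
      = if k = j.val + 1 then t else zc n z k :=
    fun k h1 h2 => zc_update n z j t k h1 h2
  have hzeven : ∀ k, 1 ≤ k → k ≤ n → k % 2 = 0 → zc n z k = 0 := by
    intro k h1 h2 h3
    rw [hz, zc_ptV2 n x k h1 h2, if_neg (by omega), if_pos h3]
  have hzodd : ∀ k, 2 ≤ k → k ≤ n → k % 2 = 1 → zc n z k = (-1 : ℂ) ^ ((k - 1) / 2) := by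
    intro k h1 h2 h3
    rw [hz, zc_ptV2 n x k (by omega) h2, if_neg (by omega), if_neg (by omega)]
  have hweven : ∀ k, 1 ≤ k → k ≤ n → k % 2 = 0 → k ≠ j.val + 1 →
      zc n (Function.update z j t) k = 0 := by
    intro k h1 h2 h3 h4; rw [hwk k h1 h2, if_neg h4]; exact hzeven k h1 h2 h3
  have hprod : (∏ i, Function.update z j t i) = 0 := prod_update_ptV2 n hn x t j
  rw [W0, hprod]
  by_cases hodd : (j.val + 1) % 2 = 1
  -- updated coordinate has odd one-based index: everything even is 0
  · have h2 : zc n (Function.update z j t) 2 = 0 := hweven 2 (by omega) (by omega) rfl (by omega)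
    have hnn : zc n (Function.update z j t) n = 0 := by
      refine hweven n (by omega) le_rfl ?_ ?_
      · obtain ⟨k, hk⟩ := hev; omega
      · obtain ⟨k, hk⟩ := hev; omega
    have hsum : ∑ i ∈ Finset.Icc 2 (n - 1),
        zc n (Function.update z j t) i * zc n (Function.update z j t) (i + 1) = 0 := by
      refine Finset.sum_eq_zero ?_
      intro i hi
      rw [Finset.mem_Icc] at hi
      by_cases he : i % 2 = 0
      · rw [hweven i (by omega) (by omega) he (by omega), zero_mul]
      · rw [hweven (i+1) (by omega) (by omega) (by omega) (by omega), mul_zero]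
    rw [h2, hnn, hsum]
    ring
  · by_cases hj2 : j.val + 1 = 2
    -- j1 = 2
    · have h2 : zc n (Function.update z j t) 2 = t := by rw [hwk 2 (by omega) (by omega), if_pos (by omega)]
      have hnn : zc n (Function.update z j t) n = 0 := hweven n (by omega) le_rfl (by obtain ⟨k, hk⟩ := hev; omega) (by omega)
      have hsum : ∑ i ∈ Finset.Icc 2 (n - 1),
          zc n (Function.update z j t) i * zc n (Function.update z j t) (i + 1) = -t := by
        rw [Finset.sum_eq_single_of_mem 2 (Finset.mem_Icc.mpr (by omega))]
        · rw [hwk 2 (by omega) (by omega), if_pos (by omega),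
            hwk 3 (by omega) (by omega), if_neg (by omega),
            hzodd 3 (by omega) (by omega) (by omega)]
          norm_num
        · intro i hi hne
          rw [Finset.mem_Icc] at hi
          by_cases he : i % 2 = 0
          · rw [hweven i (by omega) (by omega) he (by omega), zero_mul]
          · rw [hweven (i+1) (by omega) (by omega) (by omega) (by omega), mul_zero]
      rw [h2, hnn, hsum]
      ring
    · by_cases hjn : j.val + 1 = n
      -- j1 = n
      · have h1 : zc n (Function.update z j t) 1 = x := by
          rw [hwk 1 (by omega) (by omega), if_neg (by omega), hz,
            zc_ptV2 n x 1 (by omega) (by omega), if_pos rfl]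
        have h2 : zc n (Function.update z j t) 2 = 0 := hweven 2 (by omega) (by omega) rfl (by omega)
        have hnn : zc n (Function.update z j t) n = t := by
          rw [hwk n (by omega) le_rfl, if_pos (by omega)]
        have hsum : ∑ i ∈ Finset.Icc 2 (n - 1),
            zc n (Function.update z j t) i * zc n (Function.update z j t) (i + 1)
              = (-1 : ℂ) ^ ((n - 2) / 2) * t := by
          rw [Finset.sum_eq_single_of_mem (n-1) (Finset.mem_Icc.mpr (by omega))]
          · rw [hwk (n-1) (by omega) (by omega), if_neg (by omega),
              show n - 1 + 1 = n by omega, hwk n (by omega) le_rfl, if_pos (by omega),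
              hzodd (n-1) (by omega) (by omega) (by obtain ⟨k, hk⟩ := hev; omega),
              show n - 1 - 1 = n - 2 by omega]
          · intro i hi hne
            rw [Finset.mem_Icc] at hi
            by_cases he : i % 2 = 0
            · rw [hweven i (by omega) (by omega) he (by omega), zero_mul]
            · rw [hweven (i+1) (by omega) (by omega) (by omega) (by omega), mul_zero]
        rw [h1, h2, hnn, hsum]
        linear_combination -t * hx
      -- j1 even, 4 ≤ j1 ≤ n - 2
      · have h2 : zc n (Function.update z j t) 2 = 0 := hweven 2 (by omega) (by omega) rfl (by omega)
        have hnn : zc n (Function.update z j t) n = 0 := hweven n (by omega) le_rfl (by obtain ⟨k, hk⟩ := hev; omega) (by omega)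
        have hj4 : 4 ≤ j.val + 1 := by omega
        have hjle : j.val + 1 ≤ n - 2 := by obtain ⟨k, hk⟩ := hev; omega
        have hsum : ∑ i ∈ Finset.Icc 2 (n - 1),
            zc n (Function.update z j t) i * zc n (Function.update z j t) (i + 1) = 0 := by
          rw [sum_two_special _ (Finset.mem_Icc.mpr (show 2 ≤ j.val ∧ j.val ≤ n - 1 by omega))
            (Finset.mem_Icc.mpr (show 2 ≤ j.val + 1 ∧ j.val + 1 ≤ n - 1 by omega)) (by omega) ?_]
          · rw [hwk j.val (by omega) (by omega), if_neg (by omega),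
              hwk (j.val + 1) (by omega) (by omega), if_pos rfl,
              hwk (j.val + 1 + 1) (by omega) (by omega), if_neg (by omega),
              hzodd j.val (by omega) (by omega) (by omega),
              hzodd (j.val + 1 + 1) (by omega) (by omega) (by omega)]
            rw [show (j.val + 1 + 1 - 1) / 2 = (j.val - 1) / 2 + 1 by omega, pow_succ]
            ring
          · intro i hi hne1 hne2
            rw [Finset.mem_Icc] at hi
            by_cases he : i % 2 = 0
            · rw [hweven i (by omega) (by omega) he (by omega), zero_mul]
            · rw [hweven (i+1) (by omega) (by omega) (by omega) (by omega), mul_zero]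
        rw [h2, hnn, hsum]
        ring

lemma crit_ptV2 (n : ℕ) (hn : 4 ≤ n) (hev : Even n) (q x : ℂ)
    (hx : q * x ^ 2 = (-1 : ℂ) ^ ((n - 2) / 2)) :
    IsCritPt n q (ptV2 n x) := by
  constructor
  · rw [prod_ptV2 n (by omega) x]; norm_num
  · intro j
    have : (fun t => W0 n q (Function.update (ptV2 n x) j t)) = fun _ => 0 := by
      funext t; exact W0_update_ptV2 n hn hev q x hx j t
    rw [this, deriv_const]

lemma crit_ptV1 (n : ℕ) (hn : 4 ≤ n) (hev : Even n) (q x y : ℂ)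
    (hx : q * x ^ 2 = 1) (hxy : x * y ^ (n / 2) = 2) :
    IsCritPt n q (ptV1 n x y) := by
  classical
  set z := ptV1 n x y with hz
  have hprodz : ∏ i, z i = x * y ^ (n / 2) := prod_ptV1 n (by omega) hev x y
  constructor
  · rw [hprodz, hxy]; norm_num
  intro j
  set c : ℂ := ∏ i ∈ Finset.univ.erase j, z i with hc
  have hprodupd : ∀ t : ℂ, (∏ i, Function.update z j t i) = t * c := by
    intro t
    rw [Finset.prod_update_of_mem (Finset.mem_univ j) z t, hc,
      Finset.sdiff_singleton_eq_erase]
  have hcz : c * z j = 2 := by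
    rw [hc, Finset.prod_erase_mul _ _ (Finset.mem_univ j), hprodz, hxy]
  have hwk : ∀ (t : ℂ) (k : ℕ), 1 ≤ k → k ≤ n →
      zc n (Function.update z j t) k = if k = j.val + 1 then t else zc n z k :=
    fun t k h1 h2 => zc_update n z j t k h1 h2
  have hz1 : zc n z 1 = x := by
    rw [hz, zc_ptV1 n x y 1 (by omega) (by omega), if_pos rfl]
  have hzk : ∀ k, 2 ≤ k → k ≤ n → zc n z k = if k % 2 = 0 then y else 1 := by
    intro k h1 h2
    rw [hz, zc_ptV1 n x y k (by omega) h2, if_neg (by omega)]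
  have hzj : zc n z (j.val + 1) = z j := by
    rw [zc_def n z (j.val + 1) (by omega) (by omega)]
    exact congrArg z (Fin.ext (by simp))
  have hnev : n % 2 = 0 := by obtain ⟨k, hk⟩ := hev; omega
  by_cases hj1 : j.val = 0
  -- Case j1 = 1
  · have hzjx : z j = x := by rw [← hzj, hj1]; simpa using hz1
    have hfun : (fun t => W0 n q (Function.update z j t))
        = fun t => (q * y) * t ^ 2 / (c * t - 1)
            + ((0 : ℂ) * t
              + (zc n z 2 + ∑ i ∈ Finset.Icc 2 (n-1), zc n z i * zc n z (i+1))) := by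
      funext t
      rw [W0, hprodupd t]
      rw [hwk t 1 (by omega) (by omega), if_pos (by omega)]
      rw [hwk t n (by omega) (le_refl n), if_neg (by omega)]
      rw [hwk t 2 (by omega) (by omega), if_neg (by omega)]
      rw [hzk n (by omega) (le_refl n), if_pos hnev]
      have hsc : (∑ i ∈ Finset.Icc 2 (n-1),
          zc n (Function.update z j t) i * zc n (Function.update z j t) (i+1))
          = ∑ i ∈ Finset.Icc 2 (n-1), zc n z i * zc n z (i+1) := by
        refine Finset.sum_congr rfl ?_
        intro i hi
        rw [Finset.mem_Icc] at hi
        rw [hwk t i (by omega) (by omega), if_neg (by omega),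
          hwk t (i+1) (by omega) (by omega), if_neg (by omega)]
      rw [hsc]
      ring
    rw [hzjx] at hcz
    have hne : c * x - 1 ≠ 0 := by rw [hcz]; norm_num
    rw [hfun, hzjx, deriv_aux _ _ _ _ _ _ hne]
    have hd : c * x - 1 = 1 := by rw [hcz]; norm_num
    rw [hd]
    norm_num
    linear_combination -q*y*x*hcz
  by_cases hj2 : j.val = 1
  -- Case j1 = 2
  · have hzjy : z j = y := by
      rw [← hzj, hj2, hzk 2 (by omega) (by omega), if_pos rfl]
    have hfun : (fun t => W0 n q (Function.update z j t))
        = fun t => (q * x ^ 2 * y) * t ^ 0 / (c * t - 1)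
            + ((2 : ℂ) * t
              + ∑ i ∈ (Finset.Icc 2 (n-1)).erase 2, zc n z i * zc n z (i+1)) := by
      funext t
      rw [W0, hprodupd t]
      rw [hwk t 1 (by omega) (by omega), if_neg (by omega), hz1]
      rw [hwk t n (by omega) (le_refl n), if_neg (by omega)]
      rw [hzk n (by omega) (le_refl n), if_pos hnev]
      rw [hwk t 2 (by omega) (by omega), if_pos (by omega)]
      have hsc : (∑ i ∈ Finset.Icc 2 (n-1),
          zc n (Function.update z j t) i * zc n (Function.update z j t) (i+1))
          = t * 1 + ∑ i ∈ (Finset.Icc 2 (n-1)).erase 2, zc n z i * zc n z (i+1) := by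
        rw [← Finset.add_sum_erase _ _ (Finset.mem_Icc.mpr (show 2 ≤ 2 ∧ 2 ≤ n - 1 by omega))]
        congr 1
        · rw [hwk t 2 (by omega) (by omega), if_pos (by omega),
            hwk t 3 (by omega) (by omega), if_neg (by omega),
            hzk 3 (by omega) (by omega), if_neg (by omega)]
        · refine Finset.sum_congr rfl ?_
          intro i hi
          rw [Finset.mem_erase, Finset.mem_Icc] at hi
          rw [hwk t i (by omega) (by omega), if_neg (by omega),
            hwk t (i+1) (by omega) (by omega), if_neg (by omega)]
      rw [hsc]
      ring
    rw [hzjy] at hcz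
    have hne : c * y - 1 ≠ 0 := by rw [hcz]; norm_num
    rw [hfun, hzjy, deriv_aux _ _ _ _ _ _ hne]
    have hd : c * y - 1 = 1 := by rw [hcz]; norm_num
    rw [hd]
    norm_num
    linear_combination -(y*c)*hx - hcz
  by_cases hjn : j.val + 1 = n
  -- Case j1 = n
  · have hzjy : z j = y := by
      rw [← hzj, hjn, hzk n (by omega) (le_refl n), if_pos hnev]
    have hfun : (fun t => W0 n q (Function.update z j t))
        = fun t => (q * x ^ 2) * t ^ 1 / (c * t - 1)
            + ((1 : ℂ) * t
              + (zc n z 2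
                + ∑ i ∈ (Finset.Icc 2 (n-1)).erase (n-1), zc n z i * zc n z (i+1))) := by
      funext t
      rw [W0, hprodupd t]
      rw [hwk t 1 (by omega) (by omega), if_neg (by omega), hz1]
      rw [hwk t n (by omega) (le_refl n), if_pos (by omega)]
      rw [hwk t 2 (by omega) (by omega), if_neg (by omega)]
      have hsc : (∑ i ∈ Finset.Icc 2 (n-1),
          zc n (Function.update z j t) i * zc n (Function.update z j t) (i+1))
          = 1 * t + ∑ i ∈ (Finset.Icc 2 (n-1)).erase (n-1), zc n z i * zc n z (i+1) := by
        rw [← Finset.add_sum_erase _ _ (Finset.mem_Icc.mpr (show 2 ≤ n - 1 ∧ n - 1 ≤ n - 1 by omega))]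
        congr 1
        · rw [hwk t (n-1) (by omega) (by omega), if_neg (by omega),
            show n - 1 + 1 = n by omega,
            hwk t n (by omega) (le_refl n), if_pos (by omega),
            hzk (n-1) (by omega) (by omega), if_neg (by omega)]
        · refine Finset.sum_congr rfl ?_
          intro i hi
          rw [Finset.mem_erase, Finset.mem_Icc] at hi
          rw [hwk t i (by omega) (by omega), if_neg (by omega),
            hwk t (i+1) (by omega) (by omega), if_neg (by omega)]
      rw [hsc]
      ring
    rw [hzjy] at hcz
    have hne : c * y - 1 ≠ 0 := by rw [hcz]; norm_num
    rw [hfun, hzjy, deriv_aux _ _ _ _ _ _ hne]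
    have hd : c * y - 1 = 1 := by rw [hcz]; norm_num
    rw [hd]
    norm_num
    linear_combination (1 - y*c)*hx - hcz
  -- Case 3 ≤ j1 ≤ n-1
  · have hb : 2 ≤ j.val ∧ j.val + 1 ≤ n - 1 := ⟨by omega, by omega⟩
    have hfun : (fun t => W0 n q (Function.update z j t))
        = fun t => (q * x ^ 2 * y) * t ^ 0 / (c * t - 1)
            + ((zc n z j.val + zc n z (j.val + 2)) * t
              + (zc n z 2
                + ∑ i ∈ ((Finset.Icc 2 (n-1)).erase j.val).erase (j.val + 1),
                    zc n z i * zc n z (i+1))) := by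
      funext t
      rw [W0, hprodupd t]
      rw [hwk t 1 (by omega) (by omega), if_neg (by omega), hz1]
      rw [hwk t n (by omega) (le_refl n), if_neg (by omega)]
      rw [hzk n (by omega) (le_refl n), if_pos hnev]
      rw [hwk t 2 (by omega) (by omega), if_neg (by omega)]
      have hsc : (∑ i ∈ Finset.Icc 2 (n-1),
          zc n (Function.update z j t) i * zc n (Function.update z j t) (i+1))
          = (zc n z j.val * t + t * zc n z (j.val + 2))
            + ∑ i ∈ ((Finset.Icc 2 (n-1)).erase j.val).erase (j.val + 1),
                zc n z i * zc n z (i+1) := by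
        rw [← Finset.add_sum_erase _ _ (Finset.mem_Icc.mpr (show 2 ≤ j.val ∧ j.val ≤ n - 1 by omega))]
        rw [← Finset.add_sum_erase _ _ (Finset.mem_erase.mpr
          ⟨by omega, Finset.mem_Icc.mpr (show 2 ≤ j.val + 1 ∧ j.val + 1 ≤ n - 1 by omega)⟩)]
        rw [← add_assoc]
        congr 1
        · congr 1
          · rw [hwk t j.val (by omega) (by omega), if_neg (by omega),
              hwk t (j.val + 1) (by omega) (by omega), if_pos rfl]
          · rw [hwk t (j.val + 1) (by omega) (by omega), if_pos rfl,
              hwk t (j.val + 1 + 1) (by omega) (by omega), if_neg (by omega),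
              show j.val + 1 + 1 = j.val + 2 by omega]
        · refine Finset.sum_congr rfl ?_
          intro i hi
          rw [Finset.mem_erase, Finset.mem_erase, Finset.mem_Icc] at hi
          rw [hwk t i (by omega) (by omega), if_neg (by omega),
            hwk t (i+1) (by omega) (by omega), if_neg (by omega)]
      rw [hsc]
      ring
    have hne : c * z j - 1 ≠ 0 := by rw [hcz]; norm_num
    rw [hfun, deriv_aux _ _ _ _ _ _ hne]
    have hd : c * z j - 1 = 1 := by rw [hcz]; norm_num
    rw [hd]
    rw [hzk j.val (by omega) (by omega), hzk (j.val + 2) (by omega) (by omega)]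
    by_cases hpar : (j.val + 1) % 2 = 0
    -- j1 even: z j = y, neighbours = 1
    · rw [if_neg (by omega), if_neg (by omega)]
      have hzjy : z j = y := by
        rw [← hzj, hzk (j.val + 1) (by omega) (by omega), if_pos hpar]
      rw [hzjy] at hcz
      rw [hzjy]
      norm_num
      linear_combination -(y*c)*hx - hcz
    -- j1 odd: z j = 1, neighbours = y
    · rw [if_pos (by omega), if_pos (by omega)]
      have hzj1 : z j = 1 := by
        rw [← hzj, hzk (j.val + 1) (by omega) (by omega), if_neg hpar]
      rw [hzj1] at hcz
      rw [hzj1]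
      norm_num
      linear_combination -(y*c)*hx - y*hcz

end QMaux

/-- **Linear independence of `1, z₂, …, z₂ⁿ, z₁` on the critical points.**
For even `n ≥ 4` and `q ≠ 0`: if `a₀, …, a_n, b ∈ ℂ` satisfy
`∑_{i=0}^{n} aᵢ z₂(p)ⁱ + b z₁(p) = 0` at every critical point `p` of `W₀`, then all the
`aᵢ` and `b` vanish (so `{z₂ⁱ}_{0≤i≤n} ∪ {z₁}` is a basis of the Milnor ring). -/
theorem quadric_mirror_milnor_basis (n : ℕ) (hn : 4 ≤ n) (hev : Even n)
    (q : ℂ) (hq : q ≠ 0) (a : ℕ → ℂ) (b : ℂ)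
    (h : ∀ z : Fin n → ℂ, IsCritPt n q z →
      (∑ i ∈ Finset.range (n + 1), a i * (zc n z 2) ^ i) + b * zc n z 1 = 0) :
    (∀ i ≤ n, a i = 0) ∧ b = 0 := by
  have hnev : n % 2 = 0 := by obtain ⟨k, hk⟩ := hev; omega
  -- Step 1: use the two critical points in V(I₂) to get `a 0 = 0` and `b = 0`
  obtain ⟨x0, hx0⟩ := IsAlgClosed.exists_pow_nat_eq ((-1 : ℂ) ^ ((n - 2) / 2) / q)
    (by norm_num : 0 < 2)
  have hqx0 : q * x0 ^ 2 = (-1 : ℂ) ^ ((n - 2) / 2) := by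
    rw [hx0]; field_simp
  have hx0ne : x0 ≠ 0 := by
    intro h0
    rw [h0] at hqx0
    simp at hqx0
    exact pow_ne_zero _ (by norm_num : (-1 : ℂ) ≠ 0) hqx0.symm
  have hV2 : ∀ x : ℂ, q * x ^ 2 = (-1 : ℂ) ^ ((n - 2) / 2) → a 0 + b * x = 0 := by
    intro x hqx
    have hcrit := QMaux.crit_ptV2 n hn hev q x hqx
    have := h _ hcrit
    rw [QMaux.zc_ptV2 n x 2 (by omega) (by omega), if_neg (by omega), if_pos rfl] at this
    rw [QMaux.zc_ptV2 n x 1 (by omega) (by omega), if_pos rfl] at this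
    rw [Finset.sum_eq_single_of_mem 0 (Finset.mem_range.mpr (by omega))
      (fun i _ hi => by rw [zero_pow hi, mul_zero])] at this
    simpa using this
  have h1 := hV2 x0 hqx0
  have h2 := hV2 (-x0) (by rw [neg_pow]; simpa using hqx0)
  have hb : b = 0 := by
    have : b * (2 * x0) = 0 := by linear_combination h1 - h2
    rcases mul_eq_zero.mp this with h' | h'
    · exact h'
    · exact absurd h' (by simpa using hx0ne)
  have ha0 : a 0 = 0 := by
    rw [hb] at h1; simpa using h1
  -- Step 2: critical points in V(I₁)
  have key : ∀ y : ℂ, y ^ n = 4 * q → ∑ i ∈ Finset.range n, a (i + 1) * y ^ i = 0 := by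
    intro y hy
    have hyne : y ≠ 0 := by
      intro h0
      rw [h0, zero_pow (by omega : n ≠ 0)] at hy
      exact hq (by linear_combination -hy/4)
    have hym : y ^ (n / 2) ≠ 0 := pow_ne_zero _ hyne
    set x : ℂ := 2 / y ^ (n / 2) with hxdef
    have hypow : (y ^ (n / 2)) ^ 2 = 4 * q := by
      rw [← pow_mul, show n / 2 * 2 = n by omega, hy]
    have hx : q * x ^ 2 = 1 := by
      rw [hxdef, div_pow, hypow]
      field_simp
      ring
    have hxy : x * y ^ (n / 2) = 2 := by
      rw [hxdef]; field_simp
    have hcrit := QMaux.crit_ptV1 n hn hev q x y hx hxy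
    have heq := h _ hcrit
    rw [QMaux.zc_ptV1 n x y 2 (by omega) (by omega), if_neg (by omega), if_pos rfl] at heq
    rw [QMaux.zc_ptV1 n x y 1 (by omega) (by omega), if_pos rfl] at heq
    rw [hb, zero_mul, add_zero, Finset.sum_range_succ'] at heq
    rw [ha0, zero_mul, add_zero] at heq
    have heq2 : y * ∑ i ∈ Finset.range n, a (i + 1) * y ^ i = 0 := by
      rw [Finset.mul_sum, ← heq]
      exact Finset.sum_congr rfl fun i _ => by ring
    exact (mul_eq_zero.mp heq2).resolve_left hyne
  -- Step 3: the polynomial with coefficients a 1, ..., a n vanishes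
  set g : Polynomial ℂ := ∑ i ∈ Finset.range n, Polynomial.C (a (i + 1)) * Polynomial.X ^ i
    with hgdef
  have hg0 : g = 0 := by
    by_contra hg
    have hdeg : g.natDegree ≤ n - 1 := by
      refine Polynomial.natDegree_sum_le_of_forall_le _ _ ?_
      intro i hi
      rw [Finset.mem_range] at hi
      refine le_trans (Polynomial.natDegree_C_mul_le _ _) ?_
      rw [Polynomial.natDegree_X_pow]
      omega
    have hprim := Complex.isPrimitiveRoot_exp n (by omega)
    have h4q : (4 : ℂ) * q ≠ 0 := by
      intro h0
      rw [mul_eq_zero] at h0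
      norm_num at h0
      exact hq h0
    have hcard : Multiset.card (Polynomial.nthRoots n (4 * q)) = n := by
      rw [hprim.card_nthRoots, if_pos (IsAlgClosed.exists_pow_nat_eq (4 * q) (by omega))]
    have hnodup : (Polynomial.nthRoots n (4 * q)).Nodup := hprim.nthRoots_nodup h4q
    have hsub : Polynomial.nthRoots n (4 * q) ≤ g.roots := by
      rw [Multiset.le_iff_subset hnodup]
      intro y hy
      rw [Polynomial.mem_nthRoots (by omega : 0 < n)] at hy
      rw [Polynomial.mem_roots hg]
      have := key y hy
      rw [Polynomial.IsRoot, hgdef]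
      simpa [Polynomial.eval_finset_sum] using this
    have := Multiset.card_le_card hsub
    have := Polynomial.card_roots' g
    omega
  have hcoeff : ∀ k, k < n → a (k + 1) = 0 := by
    intro k hk
    have : g.coeff k = 0 := by rw [hg0]; simp
    rw [hgdef, Polynomial.finset_sum_coeff] at this
    simp only [Polynomial.coeff_C_mul, Polynomial.coeff_X_pow] at this
    rwa [Finset.sum_congr rfl (fun i _ => by
        rw [mul_ite, mul_one, mul_zero]),
      Finset.sum_ite_eq (Finset.range n) k (fun i => a (i + 1)),
      if_pos (Finset.mem_range.mpr hk)] at this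
  refine ⟨?_, hb⟩
  intro i hi
  rcases Nat.eq_zero_or_pos i with h0 | h0
  · rw [h0]; exact ha0
  · have := hcoeff (i - 1) (by omega)
    rwa [show i - 1 + 1 = i by omega] at this
end

section
/- Let n ≥ 4 be an even integer, q ∈ ℂ, λ a nonzero complex number, and z ∈ ℂ^n with z_1⋯z_n ≠ 1. Define z′ ∈ ℂ^n by z′_1 = λ^{−n/2} z_1, z′_i = λ z_i for even i with 2 ≤ i ≤ n, and z′_i = z_i for odd i with 3 ≤ i ≤ n−1. Then z′_1⋯z′_n = z_1⋯z_n, and W_0(z′, q) = λ · W_0(z, λ^{−n} q), where W_0(z, q) = q z_1^2 z_n/(z_1⋯z_n − 1) + z_2 + Σ_{i=2}^{n−1} z_i z_{i+1}. -/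
open Finset

/-- The mirror LG potential of the quadric `Qⁿ` as a function of `q` and `z ∈ ℂⁿ`
(indexed `z 1, …, z n`):
`W₀(z, q) = q z₁² z_n/(z₁⋯z_n − 1) + z₂ + ∑_{i=2}^{n−1} z_i z_{i+1}`. -/
noncomputable def W0q (n : ℕ) (q : ℂ) (z : ℕ → ℂ) : ℂ :=
  q * (z 1) ^ 2 * z n / ((∏ i ∈ Finset.Icc 1 n, z i) - 1)
    + z 2 + ∑ i ∈ Finset.Icc 2 (n - 1), z i * z (i + 1)

lemma aux_prod_rescale (lam : ℂ) (z : ℕ → ℂ) (m : ℕ) :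
    (∏ i ∈ Finset.Icc 2 (2 * m), (if Even i then lam * z i else z i))
      = lam ^ m * ∏ i ∈ Finset.Icc 2 (2 * m), z i := by
  induction m with
  | zero => simp
  | succ m ih =>
    rcases Nat.eq_zero_or_pos m with rfl | hpos
    · have h2 : Even 2 := ⟨1, rfl⟩
      simp [Finset.Icc_self, h2]
    have h2m : 2 * (m + 1) = (2 * m + 1) + 1 := by ring
    rw [h2m, Finset.prod_Icc_succ_top (show (2:ℕ) ≤ 2 * m + 1 + 1 by omega),
      Finset.prod_Icc_succ_top (show (2:ℕ) ≤ 2 * m + 1 by omega),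
      Finset.prod_Icc_succ_top (show (2:ℕ) ≤ 2 * m + 1 + 1 by omega) z,
      Finset.prod_Icc_succ_top (show (2:ℕ) ≤ 2 * m + 1 by omega) z, ih]
    have he : Even (2 * m + 1 + 1) := by
      refine ⟨m + 1, by ring⟩
    have ho : ¬ Even (2 * m + 1) := by
      simp [Nat.even_add_one]
    rw [if_pos he, if_neg ho]
    ring

/-- **Homogeneity of the mirror LG potential under rescaling** (eq. (5.15)).
For even `n ≥ 4`, `λ ≠ 0`, and `z` with `z₁⋯z_n ≠ 1`, define `z′` by
`z′₁ = λ^{−n/2} z₁`, `z′ᵢ = λ zᵢ` for even `i` with `2 ≤ i ≤ n`, and `z′ᵢ = zᵢ` for odd `i`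
with `3 ≤ i ≤ n−1`. Then `z′₁⋯z′_n = z₁⋯z_n` and `W₀(z′, q) = λ · W₀(z, λ^{−n} q)`. -/
theorem quadric_mirror_rescaling (n : ℕ) (hn : 4 ≤ n) (hev : Even n)
    (q lam : ℂ) (hlam : lam ≠ 0) (z : ℕ → ℂ)
    (hz : (∏ i ∈ Finset.Icc 1 n, z i) ≠ 1) :
    let z' : ℕ → ℂ := fun i =>
      if i = 1 then (lam ^ (n / 2))⁻¹ * z 1 else if Even i then lam * z i else z i
    (∏ i ∈ Finset.Icc 1 n, z' i) = (∏ i ∈ Finset.Icc 1 n, z i) ∧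
    W0q n q z' = lam * W0q n ((lam ^ n)⁻¹ * q) z := by
  intro z'
  obtain ⟨m, hm⟩ := hev
  have hm2 : n = 2 * m := by omega
  have hmn : n / 2 = m := by omega
  have hlm : lam ^ m ≠ 0 := pow_ne_zero m hlam
  have hprod2 : ∏ i ∈ Finset.Icc 2 n, z' i = lam ^ m * ∏ i ∈ Finset.Icc 2 n, z i := by
    have hcongr : ∏ i ∈ Finset.Icc 2 n, z' i
        = ∏ i ∈ Finset.Icc 2 n, (if Even i then lam * z i else z i) := by
      refine Finset.prod_congr rfl fun i hi => ?_
      simp only [Finset.mem_Icc] at hi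
      have : i ≠ 1 := by omega
      simp only [z', if_neg this]
    rw [hcongr, hm2, aux_prod_rescale]
  have hins : Finset.Icc 1 n = insert 1 (Finset.Icc 2 n) := by
    ext i; simp only [Finset.mem_Icc, Finset.mem_insert]; omega
  have h1notin : (1 : ℕ) ∉ Finset.Icc 2 n := by simp
  have hz'1 : z' 1 = (lam ^ m)⁻¹ * z 1 := by simp [z', hmn]
  have hP : (∏ i ∈ Finset.Icc 1 n, z' i) = (∏ i ∈ Finset.Icc 1 n, z i) := by
    rw [hins, Finset.prod_insert h1notin, Finset.prod_insert h1notin, hprod2, hz'1]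
    field_simp
  refine ⟨hP, ?_⟩
  have hz'2 : z' 2 = lam * z 2 := by
    have : Even 2 := ⟨1, rfl⟩
    simp [z', this]
  have hz'n : z' n = lam * z n := by
    have h1 : n ≠ 1 := by omega
    have h2 : Even n := ⟨m, hm⟩
    simp [z', h1, h2]
  have hsum : ∑ i ∈ Finset.Icc 2 (n - 1), z' i * z' (i + 1)
      = lam * ∑ i ∈ Finset.Icc 2 (n - 1), z i * z (i + 1) := by
    rw [Finset.mul_sum]
    refine Finset.sum_congr rfl fun i hi => ?_
    simp only [Finset.mem_Icc] at hi
    have hi1 : i ≠ 1 := by omega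
    have hi2 : i + 1 ≠ 1 := by omega
    rcases Nat.even_or_odd i with he | ho
    · have hne : ¬ Even (i + 1) := by simp [Nat.even_add_one, he]
      simp only [z', if_neg hi1, if_neg hi2, if_pos he, if_neg hne]
      ring
    · have hne : ¬ Even i := Nat.not_even_iff_odd.mpr ho
      have he1 : Even (i + 1) := Odd.add_one ho
      simp only [z', if_neg hi1, if_neg hi2, if_neg hne, if_pos he1]
      ring
  have hPne : (∏ i ∈ Finset.Icc 1 n, z i) - 1 ≠ 0 := sub_ne_zero.mpr hz
  have hln : lam ^ n = (lam ^ m) ^ 2 := by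
    rw [hm2, mul_comm 2 m, pow_mul]
  unfold W0q
  rw [hP, hz'1, hz'2, hz'n, hsum, hln]
  field_simp
end

section
/- Let n ≥ 1 be an integer and let ψ ∈ ℂ[[u]] be the formal power series ψ = Σ_{d ≥ 0} ( (2d)! / ((d!)^{n+2} 4^d) ) u^d. Let D be the operator on ℂ[[u]] given by D f = u·f′. If f_0, f_1, …, f_n ∈ ℂ[u] are polynomials such that Σ_{i=0}^{n} f_i · D^i ψ = 0 in ℂ[[u]], then f_0 = f_1 = ⋯ = f_n = 0. -/
open Finset PowerSeries

/-- The operator `D f = u · f′` (the variable times the formal derivative) on `ℂ⟦u⟧`. -/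
noncomputable def Dop (f : PowerSeries ℂ) : PowerSeries ℂ :=
  PowerSeries.X * f.derivativeFun

lemma Dop_mk (c : ℕ → ℂ) : Dop (PowerSeries.mk c) = PowerSeries.mk (fun d => (d : ℂ) * c d) := by
  ext d
  cases d with
  | zero => simp [Dop, PowerSeries.coeff_mul]
  | succ k =>
    rw [Dop, PowerSeries.coeff_succ_X_mul, show (PowerSeries.mk c).derivativeFun =
      PowerSeries.derivative ℂ (PowerSeries.mk c) from rfl, PowerSeries.coeff_derivative]
    simp [mul_comm]

lemma Dop_iter_mk (i : ℕ) (c : ℕ → ℂ) :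
    Dop^[i] (PowerSeries.mk c) = PowerSeries.mk (fun d => (d : ℂ) ^ i * c d) := by
  induction i generalizing c with
  | zero => simp
  | succ k ih =>
    rw [Function.iterate_succ_apply, Dop_mk, ih]
    ext d
    simp [pow_succ]
    ring

/-- **Linear independence of `ψ, Dψ, …, Dⁿψ` over `ℂ(u)`** (Lemma 5.9, after [BBH88]).
Let `n ≥ 1` and let `ψ = ∑_{d ≥ 0} ((2d)! / ((d!)^{n+2} 4^d)) u^d ∈ ℂ⟦u⟧`. If polynomials
`f₀, …, f_n ∈ ℂ[u]` satisfy `∑_{i=0}^{n} fᵢ · Dⁱψ = 0`, then all the `fᵢ` vanish. -/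
theorem narrow_picard_fuchs_irreducibility (n : ℕ) (hn : 1 ≤ n)
    (ψ : PowerSeries ℂ)
    (hψ : ψ = PowerSeries.mk fun d =>
      ((2 * d).factorial : ℂ) / (((d.factorial : ℂ)) ^ (n + 2) * 4 ^ d))
    (f : ℕ → Polynomial ℂ)
    (h : ∑ i ∈ Finset.range (n + 1), (f i : PowerSeries ℂ) * Dop^[i] ψ = 0) :
    ∀ i ≤ n, f i = 0 := by
  set a : ℕ → ℂ := fun d => ((2 * d).factorial : ℂ) / (((d.factorial : ℂ)) ^ (n + 2) * 4 ^ d)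
    with ha_def
  have ha0 : ∀ d, a d ≠ 0 := by
    intro d
    apply div_ne_zero
    · exact_mod_cast Nat.cast_ne_zero.2 (Nat.factorial_ne_zero _)
    · exact mul_ne_zero (pow_ne_zero _ (Nat.cast_ne_zero.2 (Nat.factorial_ne_zero _)))
        (pow_ne_zero _ (by norm_num))
  have harec : ∀ d : ℕ, 2 * ((d : ℂ) + 1) ^ (n + 1) * a (d + 1) = (2 * d + 1) * a d := by
    intro d
    have h1 : ((d + 1).factorial : ℂ) = (d + 1) * d.factorial := by
      rw [Nat.factorial_succ]; push_cast; ring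
    have h2 : ((2 * (d + 1)).factorial : ℂ) = (2 * d + 2) * ((2 * d + 1) * (2 * d).factorial) := by
      have : 2 * (d + 1) = (2 * d + 1) + 1 := by ring
      rw [this, Nat.factorial_succ, Nat.factorial_succ]; push_cast; ring
    have hd1 : ((d + 1 : ℕ) : ℂ) ≠ 0 := Nat.cast_ne_zero.2 (Nat.succ_ne_zero d)
    have hfd : ((d.factorial : ℕ) : ℂ) ≠ 0 := Nat.cast_ne_zero.2 (Nat.factorial_ne_zero _)
    simp only [ha_def]
    rw [h2, h1, mul_pow, pow_succ, ← mul_div_assoc, ← mul_div_assoc]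
    rw [div_eq_div_iff ?h1 ?h2]
    · ring
    case h1 =>
      push_cast at hd1
      exact mul_ne_zero (mul_ne_zero (pow_ne_zero _ hd1) (pow_ne_zero _ hfd))
        (pow_ne_zero _ (by norm_num))
    case h2 =>
      exact mul_ne_zero (pow_ne_zero _ hfd) (pow_ne_zero _ (by norm_num))
  -- J bounds all degrees
  set J : ℕ := ∑ i ∈ range (n + 1), ((f i).natDegree + 1) with hJ_def
  have hJc : ∀ i ∈ range (n + 1), ∀ j, J ≤ j → (f i).coeff j = 0 := by
    intro i hi j hj
    apply Polynomial.coeff_eq_zero_of_natDegree_lt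
    calc (f i).natDegree < (f i).natDegree + 1 := Nat.lt_succ_self _
    _ ≤ J := Finset.single_le_sum (f := fun i => (f i).natDegree + 1)
        (fun _ _ => Nat.zero_le _) hi
    _ ≤ j := hj
  -- the polynomials g j
  set g : ℕ → Polynomial ℂ := fun j =>
    ∑ i ∈ range (n + 1), Polynomial.C ((f i).coeff j) * Polynomial.X ^ i with hg_def
  have hgcoeff : ∀ j, ∀ i ∈ range (n + 1), (g j).coeff i = (f i).coeff j := by
    intro j i hi
    simp only [hg_def, Polynomial.finset_sum_coeff, Polynomial.coeff_C_mul,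
      Polynomial.coeff_X_pow, mul_ite, mul_one, mul_zero]
    rw [Finset.sum_ite_eq]
    simp [hi]
  have hgdeg : ∀ j, (g j).natDegree ≤ n := by
    intro j
    apply Polynomial.natDegree_sum_le_of_forall_le
    intro i hi
    calc (Polynomial.C ((f i).coeff j) * Polynomial.X ^ i).natDegree
        ≤ (Polynomial.X ^ i : Polynomial ℂ).natDegree := Polynomial.natDegree_C_mul_le _ _
      _ = i := Polynomial.natDegree_X_pow i
      _ ≤ n := Nat.lt_succ_iff.1 (mem_range.1 hi)
  have hgJ : ∀ j, J ≤ j → g j = 0 := by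
    intro j hj
    simp only [hg_def]
    apply Finset.sum_eq_zero
    intro i hi
    rw [hJc i hi j hj]; simp
  have hgeval : ∀ j (x : ℂ), (g j).eval x = ∑ i ∈ range (n + 1), (f i).coeff j * x ^ i := by
    intro j x
    simp [hg_def, Polynomial.eval_finset_sum]
  -- Step 1 : coefficient relation
  have hrel : ∀ m : ℕ,
      ∑ j ∈ range (m + 1), (g j).eval (((m - j : ℕ) : ℂ)) * a (m - j) = 0 := by
    intro m
    have h0 := congrArg (PowerSeries.coeff m) h
    rw [map_zero, map_sum] at h0
    have hco : ∀ i, (PowerSeries.coeff m) ((f i : PowerSeries ℂ) * Dop^[i] ψ) =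
        ∑ j ∈ range (m + 1), (f i).coeff j * (((m - j : ℕ) : ℂ) ^ i * a (m - j)) := by
      intro i
      rw [hψ, Dop_iter_mk, PowerSeries.coeff_mul,
        Finset.Nat.sum_antidiagonal_eq_sum_range_succ_mk]
      simp [Polynomial.coeff_coe, PowerSeries.coeff_mk]
    simp only [hco] at h0
    rw [Finset.sum_comm] at h0
    calc ∑ j ∈ range (m + 1), (g j).eval (((m - j : ℕ) : ℂ)) * a (m - j)
        = ∑ j ∈ range (m + 1), ∑ i ∈ range (n + 1),
            (f i).coeff j * (((m - j : ℕ) : ℂ) ^ i * a (m - j)) := by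
          refine Finset.sum_congr rfl fun j _ => ?_
          rw [hgeval, Finset.sum_mul]
          exact Finset.sum_congr rfl fun i _ => by ring
      _ = 0 := h0
  -- chain identity
  have hchain : ∀ L, ∀ m : ℕ, L ≤ m → ∀ j, j ≤ L →
      a (m - j) * ∏ t ∈ Ico j L, (2 * ((m : ℂ) - t) ^ (n + 1)) =
      a (m - L) * ∏ t ∈ Ico j L, (2 * ((m : ℂ) - t) - 1) := by
    intro L
    induction L with
    | zero =>
      intro m _ j hj
      interval_cases j
      simp
    | succ L ih =>
      intro m hm j hj
      rcases eq_or_lt_of_le hj with rfl | hjL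
      · simp
      have hjL' : j ≤ L := Nat.lt_succ_iff.1 hjL
      rw [Finset.prod_Ico_succ_top hjL', Finset.prod_Ico_succ_top hjL', ← mul_assoc,
        ih m (Nat.le_of_succ_le hm) j hjL']
      have hcast : ((m : ℂ) - L) = ((m - (L + 1) : ℕ) : ℂ) + 1 := by
        rw [Nat.cast_sub hm]
        push_cast
        ring
      have key : a (m - L) * (2 * ((m : ℂ) - L) ^ (n + 1)) =
          a (m - (L + 1)) * (2 * ((m : ℂ) - L) - 1) := by
        have hmL : m - L = (m - (L + 1)) + 1 := by omega
        rw [hmL, hcast]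
        linear_combination harec (m - (L + 1))
      linear_combination (∏ t ∈ Ico j L, (2 * ((m : ℂ) - t) - 1)) * key
  -- the polynomial F
  set A : ℕ → Polynomial ℂ := fun j =>
    ∏ t ∈ Ico j J, (Polynomial.C 2 * (Polynomial.X - Polynomial.C (t : ℂ)) - 1) with hA_def
  set B : ℕ → Polynomial ℂ := fun j =>
    ∏ s ∈ range j, (Polynomial.C 2 * (Polynomial.X - Polynomial.C (s : ℂ)) ^ (n + 1)) with hB_def
  set F : Polynomial ℂ := ∑ j ∈ range J,
    (g j).comp (Polynomial.X - Polynomial.C (j : ℂ)) * A j * B j with hF_def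
  have hFroot : ∀ m : ℕ, J ≤ m → F.eval (m : ℂ) = 0 := by
    intro m hm
    have hKm : a (m - J) ≠ 0 := ha0 _
    have hmain : F.eval (m : ℂ) * a (m - J) = 0 := by
      rw [hF_def, Polynomial.eval_finset_sum, Finset.sum_mul]
      have hterm : ∀ j ∈ range J,
          Polynomial.eval (m : ℂ)
              ((g j).comp (Polynomial.X - Polynomial.C (j : ℂ)) * A j * B j) * a (m - J) =
          (∏ t ∈ range J, (2 * ((m : ℂ) - t) ^ (n + 1))) *
            ((g j).eval (((m - j : ℕ) : ℂ)) * a (m - j)) := by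
        intro j hj
        have hjJ : j < J := mem_range.1 hj
        have hjm : j ≤ m := le_trans (le_of_lt hjJ) hm
        have hAe : (A j).eval (m : ℂ) = ∏ t ∈ Ico j J, (2 * ((m : ℂ) - t) - 1) := by
          simp [hA_def, Polynomial.eval_prod]
        have hBe : (B j).eval (m : ℂ) = ∏ s ∈ range j, (2 * ((m : ℂ) - s) ^ (n + 1)) := by
          simp [hB_def, Polynomial.eval_prod]
        have hce : ((g j).comp (Polynomial.X - Polynomial.C (j : ℂ))).eval (m : ℂ) =
            (g j).eval (((m - j : ℕ) : ℂ)) := by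
          rw [Polynomial.eval_comp]
          simp [Nat.cast_sub hjm]
        rw [Polynomial.eval_mul, Polynomial.eval_mul, hAe, hBe, hce]
        have hch := hchain J m hm j (le_of_lt hjJ)
        have hsplit : (∏ t ∈ range j, (2 * ((m : ℂ) - t) ^ (n + 1))) *
            (∏ t ∈ Ico j J, (2 * ((m : ℂ) - t) ^ (n + 1))) =
            ∏ t ∈ range J, (2 * ((m : ℂ) - t) ^ (n + 1)) :=
          Finset.prod_range_mul_prod_Ico _ (le_of_lt hjJ)
        linear_combination (-((g j).eval (((m - j : ℕ) : ℂ)))) *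
            (∏ s ∈ range j, (2 * ((m : ℂ) - s) ^ (n + 1))) * hch +
          ((g j).eval (((m - j : ℕ) : ℂ))) * a (m - j) * hsplit
      rw [Finset.sum_congr rfl hterm, ← Finset.mul_sum]
      have hext : ∑ j ∈ range J, (g j).eval (((m - j : ℕ) : ℂ)) * a (m - j) =
          ∑ j ∈ range (m + 1), (g j).eval (((m - j : ℕ) : ℂ)) * a (m - j) := by
        apply Finset.sum_subset
        · intro x hx
          exact mem_range.2 (lt_of_lt_of_le (mem_range.1 hx) (le_trans hm (Nat.le_succ m)))
        · intro x _ hxn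
          rw [hgJ x (le_of_not_gt (fun hc => hxn (mem_range.2 hc)))]
          simp
      rw [hext, hrel m, mul_zero]
    exact (mul_eq_zero.1 hmain).resolve_right hKm
  have hF0 : F = 0 := by
    apply Polynomial.eq_zero_of_infinite_isRoot
    apply Set.Infinite.mono (s := (fun m : ℕ => (m : ℂ)) '' {m | J ≤ m})
    · rintro x ⟨m, hm, rfl⟩
      exact hFroot m hm
    · exact Set.Infinite.image (fun x _ y _ h => Nat.cast_injective h) (Set.Ici_infinite J)
  -- induction : all g j vanish
  have hg0 : ∀ j, j < J → g j = 0 := by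
    intro j
    induction j using Nat.strong_induction_on with
    | _ j IH =>
      intro hjJ
      have hsum : ∑ j' ∈ range J,
          (g j').comp (Polynomial.X - Polynomial.C (j' : ℂ)) * A j' * B j' = 0 := by
        rw [← hF_def]; exact hF0
      have hzlt : ∑ j' ∈ range j,
          (g j').comp (Polynomial.X - Polynomial.C (j' : ℂ)) * A j' * B j' = 0 := by
        apply Finset.sum_eq_zero
        intro j' hj'
        rw [IH j' (mem_range.1 hj') (lt_trans (mem_range.1 hj') hjJ)]
        simp
      have hIco : ∑ j' ∈ Ico j J,
          (g j').comp (Polynomial.X - Polynomial.C (j' : ℂ)) * A j' * B j' = 0 := by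
        have hcons := Finset.sum_Ico_consecutive
          (f := fun j' => (g j').comp (Polynomial.X - Polynomial.C (j' : ℂ)) * A j' * B j')
          (m := 0) (n := j) (k := J) (Nat.zero_le j) (le_of_lt hjJ)
        rw [← Finset.range_eq_Ico] at hcons
        rw [hzlt, zero_add] at hcons
        rw [hcons, ← Finset.range_eq_Ico, hsum]
      have hbot : (g j).comp (Polynomial.X - Polynomial.C (j : ℂ)) * A j * B j =
          - ∑ j' ∈ Ico (j + 1) J,
              (g j').comp (Polynomial.X - Polynomial.C (j' : ℂ)) * A j' * B j' := by
        have := Finset.sum_eq_sum_Ico_succ_bot hjJ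
          (f := fun j' => (g j').comp (Polynomial.X - Polynomial.C (j' : ℂ)) * A j' * B j')
        rw [this] at hIco
        linear_combination hIco
      have hdvd : (Polynomial.X - Polynomial.C (j : ℂ)) ^ (n + 1) ∣
          (g j).comp (Polynomial.X - Polynomial.C (j : ℂ)) * (A j * B j) := by
        rw [← mul_assoc, hbot]
        apply dvd_neg.2
        apply Finset.dvd_sum
        intro j' hj'
        have hjj' : j < j' := (mem_Ico.1 hj').1
        have h1 : (Polynomial.C 2 * (Polynomial.X - Polynomial.C (j : ℂ)) ^ (n + 1)) ∣ B j' := by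
          rw [hB_def]
          exact Finset.dvd_prod_of_mem _ (mem_range.2 hjj')
        have h2 : (Polynomial.X - Polynomial.C (j : ℂ)) ^ (n + 1) ∣ B j' :=
          dvd_trans (dvd_mul_left _ _) h1
        exact dvd_trans h2 (dvd_mul_left _ _)
      have hnotdvd : ¬ (Polynomial.X - Polynomial.C (j : ℂ)) ∣ (A j * B j) := by
        rw [Polynomial.dvd_iff_isRoot, Polynomial.IsRoot.def, Polynomial.eval_mul]
        apply mul_ne_zero
        · have hAe : (A j).eval (j : ℂ) = ∏ t ∈ Ico j J, (2 * ((j : ℂ) - t) - 1) := by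
            simp [hA_def, Polynomial.eval_prod]
          rw [hAe]
          rw [Finset.prod_ne_zero_iff]
          intro t ht
          have hjt : j ≤ t := (mem_Ico.1 ht).1
          have hcast : ((2 * (t - j) + 1 : ℕ) : ℂ) = 2 * (t : ℂ) - 2 * (j : ℂ) + 1 := by
            push_cast [Nat.cast_sub hjt]
            ring
          intro heq
          have : ((2 * (t - j) + 1 : ℕ) : ℂ) = 0 := by
            rw [hcast]; linear_combination -heq
          exact Nat.cast_ne_zero.2 (by omega) this
        · have hBe : (B j).eval (j : ℂ) = ∏ s ∈ range j, (2 * ((j : ℂ) - s) ^ (n + 1)) := by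
            simp [hB_def, Polynomial.eval_prod]
          rw [hBe]
          rw [Finset.prod_ne_zero_iff]
          intro s hs
          have hsj : s < j := mem_range.1 hs
          apply mul_ne_zero (by norm_num)
          apply pow_ne_zero
          intro heq
          have : ((j - s : ℕ) : ℂ) = 0 := by
            rw [Nat.cast_sub (le_of_lt hsj)]; linear_combination heq
          exact Nat.cast_ne_zero.2 (by omega) this
      have hpow : (Polynomial.X - Polynomial.C (j : ℂ)) ^ (n + 1) ∣
          (g j).comp (Polynomial.X - Polynomial.C (j : ℂ)) :=
        (Polynomial.prime_X_sub_C (j : ℂ)).pow_dvd_of_dvd_mul_right _ hnotdvd hdvd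
      have hcomp0 : (g j).comp (Polynomial.X - Polynomial.C (j : ℂ)) = 0 := by
        by_contra hne
        have hdeg := Polynomial.natDegree_le_of_dvd hpow hne
        rw [Polynomial.natDegree_pow, Polynomial.natDegree_X_sub_C, mul_one] at hdeg
        have hle : ((g j).comp (Polynomial.X - Polynomial.C (j : ℂ))).natDegree ≤ n := by
          rw [Polynomial.natDegree_comp, Polynomial.natDegree_X_sub_C, mul_one]
          exact hgdeg j
        omega
      have hback : g j = ((g j).comp (Polynomial.X - Polynomial.C (j : ℂ))).comp
          (Polynomial.X + Polynomial.C (j : ℂ)) := by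
        rw [Polynomial.comp_assoc]
        simp [Polynomial.sub_comp]
      rw [hback, hcomp0, Polynomial.zero_comp]
  -- conclude
  intro i hi
  ext j
  rcases lt_or_ge j J with hj | hj
  · have := hgcoeff j i (mem_range.2 (Nat.lt_succ_of_le hi))
    rw [hg0 j hj] at this
    simpa using this.symm
  · simp [hJc i (mem_range.2 (Nat.lt_succ_of_le hi)) j hj]
end

section
/- For all natural numbers n and m: if n ≤ m then 2^m · Σ_{l=0}^{n} (−1)^{n−l} C(n,l) C(2l,m) = 4^n · C(n, m−n) (an identity of integers, where C(a,b) denotes the binomial coefficient, equal to 0 when b > a); and if m < n then Σ_{l=0}^{n} (−1)^{n−l} C(n,l) C(2l,m) = 0. -/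
open Finset Polynomial

lemma coeff_aux (n m : ℕ) :
    ((X ^ 2 + 2 * X : ℤ[X]) ^ n).coeff m
      = ∑ l ∈ Finset.range (n + 1),
          (-1 : ℤ) ^ (n - l) * (n.choose l : ℤ) * ((2 * l).choose m : ℤ) := by
  have h : (X ^ 2 + 2 * X : ℤ[X]) = (X + 1) ^ 2 + (-1) := by ring
  rw [h, add_pow, finset_sum_coeff]
  refine Finset.sum_congr rfl fun l hl => ?_
  have h2 : ((X + 1 : ℤ[X]) ^ 2) ^ l * (-1) ^ (n - l) * (n.choose l : ℤ[X])
      = C ((-1 : ℤ) ^ (n - l) * (n.choose l : ℤ)) * (X + 1) ^ (2 * l) := by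
    rw [← pow_mul, map_mul, ← C_eq_natCast, ← C_1, ← C_neg, ← C_pow]
    ring
  rw [h2, coeff_C_mul, coeff_X_add_one_pow]

lemma coeff_aux2 (n m : ℕ) :
    ((X ^ 2 + 2 * X : ℤ[X]) ^ n).coeff m
      = if n ≤ m then 2 ^ (n - (m - n)) * (n.choose (m - n) : ℤ) else 0 := by
  have h : (X ^ 2 + 2 * X : ℤ[X]) ^ n = X ^ n * (X + C 2) ^ n := by
    rw [← mul_pow, show (C (2:ℤ)) = 2 from by norm_num]; ring
  rw [h]
  split
  · rename_i hnm
    rw [show m = (m - n) + n by omega, coeff_X_pow_mul, coeff_X_add_C_pow,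
      Nat.add_sub_cancel]
  · rename_i hnm
    rw [coeff_X_pow_mul']
    simp [hnm]

/-- **A binomial identity** (used for the coefficients of the broad Picard–Fuchs operator):
for all `n, m ∈ ℕ`, if `n ≤ m` then
`2^m · ∑_{l=0}^{n} (−1)^{n−l} C(n,l) C(2l,m) = 4^n · C(n, m−n)`,
and if `m < n` then `∑_{l=0}^{n} (−1)^{n−l} C(n,l) C(2l,m) = 0`. -/
theorem binomial_identity_broad_PF (n m : ℕ) :
    (n ≤ m →
      2 ^ m * ∑ l ∈ Finset.range (n + 1),
          (-1 : ℤ) ^ (n - l) * (n.choose l : ℤ) * ((2 * l).choose m : ℤ)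
        = 4 ^ n * (n.choose (m - n) : ℤ)) ∧
    (m < n →
      ∑ l ∈ Finset.range (n + 1),
          (-1 : ℤ) ^ (n - l) * (n.choose l : ℤ) * ((2 * l).choose m : ℤ) = 0) := by
  have key := (coeff_aux n m).symm.trans (coeff_aux2 n m)
  constructor
  · intro hnm
    rw [key, if_pos hnm]
    by_cases h2 : m ≤ 2 * n
    · have : (4 : ℤ) ^ n = 2 ^ m * 2 ^ (n - (m - n)) := by
        rw [← pow_add, show m + (n - (m - n)) = 2 * n by omega, pow_mul]; norm_num
      rw [this]; ring
    · rw [Nat.choose_eq_zero_of_lt (by omega)]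
      simp
  · intro hmn
    rw [key, if_neg (by omega)]
end

section
/- Let n ≥ 4 be an even integer. For n/2 + 1 ≤ k ≤ n + 1 define the polynomial P_k(X) = (2X − n) · Σ_{i = n/2+1}^{k} C(k,i) (n/2)^{k−i} (X − n)^{i − n/2 − 1} in ℚ[X], and let e_{k,j} denote the coefficient of X^j in P_k. Then the (n/2 + 1) × (n/2 + 1) matrix N = (e_{k,j}) with rows indexed by j = 0, 1, …, n/2 and columns indexed by k = n/2 + 1, n/2 + 2, …, n + 1 has nonzero determinant. -/
open Finset Polynomial

noncomputable def auxP (m k : ℕ) : Polynomial ℚ :=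
  (2 * X - C (2 * (m:ℚ))) *
    ∑ i ∈ Icc (m + 1) k,
      C ((k.choose i : ℚ) * (m:ℚ) ^ (k - i)) * (X - C (2 * (m:ℚ))) ^ (i - m - 1)

lemma auxP_natDegree_le (m k : ℕ) (hk : m + 1 ≤ k) : (auxP m k).natDegree ≤ k - m := by
  have h1 : (2 * X - C (2*(m:ℚ))).natDegree ≤ 1 := by compute_degree
  have h2 : (∑ i ∈ Icc (m+1) k, C ((k.choose i : ℚ) * (m:ℚ) ^ (k - i)) *
      (X - C (2*(m:ℚ))) ^ (i - m - 1)).natDegree ≤ k - m - 1 := by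
    apply natDegree_sum_le_of_forall_le
    intro i hi
    rw [Finset.mem_Icc] at hi
    refine le_trans (natDegree_C_mul_le _ _) ?_
    rw [natDegree_pow, natDegree_X_sub_C, mul_one]
    omega
  refine le_trans natDegree_mul_le ?_
  omega

lemma auxP_eval (m k : ℕ) : (auxP m k).eval (m:ℚ) = 0 := by
  unfold auxP
  rw [eval_mul]
  have : ((2 * X - C (2 * (m:ℚ))).eval (m:ℚ)) = 0 := by simp
  rw [this, zero_mul]

lemma auxP_coeff_top (m k : ℕ) (hk : m + 1 ≤ k) : (auxP m k).coeff (k - m) = 2 := by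
  unfold auxP
  rw [Finset.mul_sum, finset_sum_coeff]
  rw [Finset.sum_eq_single_of_mem k (by simp [hk])]
  · have hc : ((k.choose k : ℚ) * (m:ℚ) ^ (k - k)) = 1 := by simp
    rw [hc, map_one, one_mul]
    have hfac : (2 * X - C (2*(m:ℚ)) : ℚ[X]) = C 2 * (X - C (m:ℚ)) := by
      have h2C : (C (2:ℚ) : ℚ[X]) = 2 := by exact_mod_cast rfl
      rw [mul_sub, ← C_mul, h2C]
    rw [hfac, mul_assoc, coeff_C_mul]
    have hmon : ((X - C (m:ℚ)) * (X - C (2*(m:ℚ))) ^ (k - m - 1)).Monic :=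
      (monic_X_sub_C _).mul ((monic_X_sub_C _).pow _)
    have hdeg : ((X - C (m:ℚ)) * (X - C (2*(m:ℚ))) ^ (k - m - 1)).natDegree = k - m := by
      rw [(monic_X_sub_C _).natDegree_mul ((monic_X_sub_C _).pow _),
        natDegree_X_sub_C, natDegree_pow, natDegree_X_sub_C, mul_one]
      omega
    have hcn := hmon.coeff_natDegree
    rw [hdeg] at hcn
    rw [hcn]
    norm_num
  · intro i hi hne
    rw [Finset.mem_Icc] at hi
    apply coeff_eq_zero_of_natDegree_lt
    have h1 : (2 * X - C (2*(m:ℚ))).natDegree ≤ 1 := by compute_degree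
    have h2 : (C ((k.choose i : ℚ) * (m:ℚ) ^ (k - i)) *
        (X - C (2*(m:ℚ))) ^ (i - m - 1)).natDegree ≤ i - m - 1 := by
      refine le_trans (natDegree_C_mul_le _ _) ?_
      rw [natDegree_pow, natDegree_X_sub_C, mul_one]
    refine lt_of_le_of_lt natDegree_mul_le ?_
    omega

/-- **Nonsingularity of the matrix controlling the broad Picard–Fuchs coefficients**
(from the proof of Lemma 5.14). Let `n ≥ 4` be even. For `n/2 + 1 ≤ k ≤ n + 1` let
`P_k(X) = (2X − n) · ∑_{i=n/2+1}^{k} C(k,i) (n/2)^{k−i} (X − n)^{i−n/2−1} ∈ ℚ[X]`, and let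
`e_{k,j}` be the coefficient of `X^j` in `P_k`. Then the `(n/2+1) × (n/2+1)` matrix
`N = (e_{k,j})` with rows `j = 0, …, n/2` and columns `k = n/2+1, …, n+1` has nonzero
determinant. -/
theorem broad_PF_coefficient_matrix_nonsingular (n : ℕ) (hn : 4 ≤ n) (hev : Even n) :
    let P : ℕ → Polynomial ℚ := fun k =>
      (2 * Polynomial.X - Polynomial.C (n : ℚ)) *
        ∑ i ∈ Finset.Icc (n / 2 + 1) k,
          Polynomial.C ((k.choose i : ℚ) * ((n : ℚ) / 2) ^ (k - i)) *
            (Polynomial.X - Polynomial.C (n : ℚ)) ^ (i - n / 2 - 1)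
    (Matrix.of fun (j k : Fin (n / 2 + 1)) =>
        (P (n / 2 + 1 + (k : ℕ))).coeff (j : ℕ)).det ≠ 0 := by
  intro P
  have hev' := Nat.even_iff.mp hev
  set m := n / 2 with hmdef
  have hn' : n = 2 * m := by omega
  have hm2 : 2 ≤ m := by omega
  have hQ1 : ((n:ℚ)) = 2 * (m:ℚ) := by rw [hn']; push_cast; ring
  have hQ2 : ((n:ℚ)) / 2 = (m:ℚ) := by rw [hQ1]; ring
  have hP : ∀ k, P k = auxP m k := by
    intro k
    simp only [P, auxP, ← hmdef, hQ2, hQ1, (show (2*(m:ℚ))/2 = (m:ℚ) by ring)]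
  set N : Matrix (Fin (m+1)) (Fin (m+1)) ℚ :=
    Matrix.of fun j k => (P (m + 1 + (k:ℕ))).coeff (j:ℕ) with hN
  show N.det ≠ 0
  have hNentry : ∀ j c : Fin (m+1), N j c = (auxP m (m+1+(c:ℕ))).coeff (j:ℕ) := by
    intro j c; simp only [hN, Matrix.of_apply, hP]
  have hmQ : (m:ℚ) ≠ 0 := by
    exact_mod_cast (by omega : m ≠ 0)
  have hzero : ∀ j c : Fin (m+1), (c:ℕ) + 2 ≤ (j:ℕ) → N j c = 0 := by
    intro j c h
    rw [hNentry]
    apply coeff_eq_zero_of_natDegree_lt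
    have := auxP_natDegree_le m (m+1+(c:ℕ)) (by omega)
    omega
  have hdiag : ∀ j c : Fin (m+1), (j:ℕ) = (c:ℕ) + 1 → N j c = 2 := by
    intro j c h
    rw [hNentry, h]
    have := auxP_coeff_top m (m+1+(c:ℕ)) (by omega)
    rw [show m+1+(c:ℕ) - m = (c:ℕ)+1 by omega] at this
    exact this
  have hsum : ∀ c : Fin (m+1),
      ∑ j : Fin (m+1), (m:ℚ)^(j:ℕ) * N j c
        = if c = Fin.last m then -2*(m:ℚ)^(m+1) else 0 := by
    intro c
    have hrange : ∑ j : Fin (m+1), (m:ℚ)^(j:ℕ) * N j c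
        = ∑ j ∈ Finset.range (m+1), (auxP m (m+1+(c:ℕ))).coeff j * (m:ℚ)^j := by
      simp only [hNentry]
      rw [Fin.sum_univ_eq_sum_range (fun t => (m:ℚ)^t * (auxP m (m+1+(c:ℕ))).coeff t) (m+1)]
      exact Finset.sum_congr rfl (fun t _ => by ring)
    rw [hrange]
    by_cases hc : c = Fin.last m
    · have hcv : (c:ℕ) = m := by rw [hc]; simp
      have hdeg : (auxP m (m+1+(c:ℕ))).natDegree < m + 2 := by
        have := auxP_natDegree_le m (m+1+(c:ℕ)) (by omega)
        omega
      have heval := eval_eq_sum_range' hdeg ((m:ℚ))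
      rw [Finset.sum_range_succ, auxP_eval] at heval
      have hcoef : (auxP m (m+1+(c:ℕ))).coeff (m+1) = 2 := by
        have := auxP_coeff_top m (m+1+(c:ℕ)) (by omega)
        rw [show m+1+(c:ℕ) - m = m+1 by omega] at this
        exact this
      rw [hcoef] at heval
      rw [if_pos hc]
      linarith
    · have hcv : (c:ℕ) < m := by
        have := c.isLt
        have : (c:ℕ) ≠ m := fun h => hc (Fin.ext (by simp [h]))
        omega
      have hdeg : (auxP m (m+1+(c:ℕ))).natDegree < m + 1 := by
        have := auxP_natDegree_le m (m+1+(c:ℕ)) (by omega)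
        omega
      have heval := eval_eq_sum_range' hdeg ((m:ℚ))
      rw [auxP_eval] at heval
      rw [if_neg hc]
      linarith
  rw [Ne, ← Matrix.exists_mulVec_eq_zero_iff]
  rintro ⟨v, hv0, hv⟩
  have hrow : ∀ j : Fin (m+1), ∑ c, N j c * v c = 0 := by
    intro j
    have := congrFun hv j
    simpa [Matrix.mulVec, dotProduct] using this
  have hvlast : v (Fin.last m) = 0 := by
    have h0 : ∑ j : Fin (m+1), (m:ℚ)^(j:ℕ) * (∑ c, N j c * v c) = 0 := by
      simp [hrow]
    have h1 : ∑ c : Fin (m+1), (∑ j : Fin (m+1), (m:ℚ)^(j:ℕ) * N j c) * v c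
        = ∑ j : Fin (m+1), (m:ℚ)^(j:ℕ) * (∑ c, N j c * v c) := by
      simp_rw [Finset.sum_mul, Finset.mul_sum]
      rw [Finset.sum_comm]
      exact Finset.sum_congr rfl (fun j _ => Finset.sum_congr rfl (fun c _ => by ring))
    rw [h0] at h1
    simp only [hsum, ite_mul, zero_mul] at h1
    rw [Finset.sum_ite_eq' Finset.univ (Fin.last m) (fun c => -2*(m:ℚ)^(m+1) * v c)] at h1
    simp only [Finset.mem_univ, if_true] at h1
    have hA : (-2*(m:ℚ)^(m+1)) ≠ 0 := by
      simp [hmQ]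
    exact (mul_eq_zero.mp h1).resolve_left hA
  have hdown : ∀ d : ℕ, d ≤ m → ∀ c : Fin (m+1), m - d ≤ (c:ℕ) → v c = 0 := by
    intro d
    induction d with
    | zero =>
      intro _ c hc
      have hcl : c = Fin.last m := by
        apply Fin.ext
        have := c.isLt
        simp only [Fin.val_last]
        omega
      rw [hcl]; exact hvlast
    | succ d ih =>
      intro hd c hc
      by_cases hcase : m - d ≤ (c:ℕ)
      · exact ih (by omega) c hcase
      · have hcval : (c:ℕ) = m - d - 1 := by omega
        have hjlt : m - d < m + 1 := by omega
        set j : Fin (m+1) := ⟨m - d, hjlt⟩ with hj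
        have hrj := hrow j
        rw [Finset.sum_eq_single c] at hrj
        · have h2 : N j c = 2 := by
            apply hdiag
            show m - d = (c:ℕ) + 1
            omega
          rw [h2] at hrj
          linarith
        · intro c' _ hne
          by_cases h' : m - d ≤ (c':ℕ)
          · rw [ih (by omega) c' h', mul_zero]
          · have hne' : (c':ℕ) ≠ (c:ℕ) := fun h => hne (Fin.ext h)
            have hle : (c':ℕ) + 2 ≤ (j:ℕ) := by
              show (c':ℕ) + 2 ≤ m - d
              omega
            rw [hzero j c' hle, zero_mul]
        · intro h
          exact absurd (Finset.mem_univ c) h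
  refine hv0 ?_
  funext c
  exact hdown m le_rfl c (by omega)
end

section
/- Let n ≥ 4 be an even integer. For smooth functions f : (0,∞) → ℂ let (Df)(x) = x·f′(x), and define the operator P_br by (P_br f) = (D² − n²/4)^{n/2+1} f − 4 n^n x^{−n} · ((D − n/2)(D − n) f), where (D² − n²/4) denotes the operator f ↦ D(Df) − (n²/4) f, iterated n/2 + 1 times. If c_1, …, c_{n/2−1} are complex numbers such that P_br applied to the function x ↦ x^{n/2} Σ_{i=1}^{n/2−1} c_i (log x)^i vanishes identically on (0,∞), then c_1 = c_2 = ⋯ = c_{n/2−1} = 0. -/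
open Finset
open Polynomial

/-- The operator `(D f)(x) = x · f′(x)` on functions `ℝ → ℂ`. -/
noncomputable def Dlog (f : ℝ → ℂ) : ℝ → ℂ := fun x => (x : ℂ) * deriv f x

/-- The operator `D − c`, i.e. `f ↦ (x ↦ x f′(x) − c f(x))`. -/
noncomputable def DlogShift (c : ℂ) (f : ℝ → ℂ) : ℝ → ℂ := fun x => Dlog f x - c * f x

noncomputable def Gfun (m : ℕ) (p : ℂ[X]) : ℝ → ℂ :=
  fun x => (x : ℂ) ^ m * p.eval (Real.log x : ℂ)

noncomputable def Tp (m : ℕ) (p : ℂ[X]) : ℂ[X] := (m : ℂ) • p + derivative p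

lemma hasDerivAt_Gfun (m : ℕ) (p : ℂ[X]) {x : ℝ} (hx : 0 < x) :
    HasDerivAt (Gfun m p)
      ((m : ℂ) * (x : ℂ) ^ (m - 1) * p.eval (Real.log x : ℂ)
        + (x : ℂ) ^ m * (((x⁻¹ : ℝ) : ℂ) * (derivative p).eval (Real.log x : ℂ))) x := by
  have hx0 : x ≠ 0 := ne_of_gt hx
  have h1 : HasDerivAt (fun y : ℝ => ((y : ℂ)) ^ m) ((m : ℂ) * (x : ℂ) ^ (m - 1)) x := by
    have h := (hasDerivAt_pow m x).ofReal_comp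
    push_cast at h
    simpa using h
  have ha : HasDerivAt (fun t : ℝ => p.eval ((t : ℝ) : ℂ))
      ((derivative p).eval ((Real.log x : ℝ) : ℂ)) (Real.log x) :=
    (p.hasDerivAt _).comp_ofReal
  have h2 : HasDerivAt (fun y : ℝ => p.eval ((Real.log y : ℝ) : ℂ))
      (((x⁻¹ : ℝ) : ℂ) * (derivative p).eval (Real.log x : ℂ)) x := by
    have h := HasDerivAt.scomp (𝕜 := ℝ) x ha (Real.hasDerivAt_log hx0)
    simpa [Complex.real_smul, Function.comp_def] using h
  exact h1.mul h2

lemma dlog_Gfun {m : ℕ} (hm : 1 ≤ m) (p : ℂ[X]) {x : ℝ} (hx : 0 < x) :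
    Dlog (Gfun m p) x = Gfun m (Tp m p) x := by
  have hx0 : (x : ℂ) ≠ 0 := by exact_mod_cast ne_of_gt hx
  have hd := (hasDerivAt_Gfun m p hx).deriv
  unfold Dlog
  rw [hd]
  unfold Gfun Tp
  have hpow : (x : ℂ) ^ m = (x : ℂ) * (x : ℂ) ^ (m - 1) := by
    conv_lhs => rw [show m = (m-1) + 1 from (Nat.succ_pred_eq_of_pos hm).symm]
    ring
  rw [Polynomial.eval_add, Polynomial.eval_smul]
  push_cast
  rw [hpow]
  field_simp
  ring

lemma dlog_congr {f g : ℝ → ℂ} (h : ∀ y : ℝ, 0 < y → f y = g y) {x : ℝ} (hx : 0 < x) :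
    Dlog f x = Dlog g x := by
  unfold Dlog
  congr 1
  apply Filter.EventuallyEq.deriv_eq
  filter_upwards [Ioi_mem_nhds hx] with y hy using h y hy

noncomputable def Qop (n : ℕ) (f : ℝ → ℂ) : ℝ → ℂ :=
  fun y => Dlog (Dlog f) y - ((n : ℂ) ^ 2 / 4) * f y

lemma Qop_congr {n : ℕ} {f g : ℝ → ℂ} (h : ∀ y : ℝ, 0 < y → f y = g y) {x : ℝ} (hx : 0 < x) :
    Qop n f x = Qop n g x := by
  unfold Qop
  rw [h x hx, dlog_congr (fun y hy => dlog_congr h hy) hx]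

noncomputable def Sp (n : ℕ) (p : ℂ[X]) : ℂ[X] :=
  Tp (n / 2) (Tp (n / 2) p) - (((n : ℂ) ^ 2 / 4)) • p

lemma Qop_Gfun {n : ℕ} (hn : 2 ≤ n) (p : ℂ[X]) {x : ℝ} (hx : 0 < x) :
    Qop n (Gfun (n / 2) p) x = Gfun (n / 2) (Sp n p) x := by
  have hm : 1 ≤ n / 2 := Nat.one_le_div_iff (by norm_num) |>.2 hn
  unfold Qop
  rw [dlog_congr (fun y hy => dlog_Gfun hm p hy) hx, dlog_Gfun hm _ hx]
  unfold Gfun Sp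
  rw [Polynomial.eval_sub, Polynomial.eval_smul, smul_eq_mul]
  push_cast
  ring

lemma Qop_iter_Gfun {n : ℕ} (hn : 2 ≤ n) (p : ℂ[X]) (k : ℕ) {x : ℝ} (hx : 0 < x) :
    (Qop n)^[k] (Gfun (n / 2) p) x = Gfun (n / 2) ((Sp n)^[k] p) x := by
  induction k generalizing x with
  | zero => simp
  | succ k ih =>
      rw [Function.iterate_succ_apply', Function.iterate_succ_apply']
      rw [Qop_congr (fun y hy => ih hy) hx]
      exact Qop_Gfun hn _ hx

lemma dlogShift_Gfun {m : ℕ} (hm : 1 ≤ m) (a : ℂ) (p : ℂ[X]) {x : ℝ} (hx : 0 < x) :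
    DlogShift a (Gfun m p) x = Gfun m (Tp m p - a • p) x := by
  unfold DlogShift
  rw [dlog_Gfun hm p hx]
  unfold Gfun
  rw [Polynomial.eval_sub, Polynomial.eval_smul, smul_eq_mul]
  ring

lemma dlogShift_congr {a : ℂ} {f g : ℝ → ℂ} (h : ∀ y : ℝ, 0 < y → f y = g y) {x : ℝ}
    (hx : 0 < x) : DlogShift a f x = DlogShift a g x := by
  unfold DlogShift
  rw [h x hx, dlog_congr h hx]

lemma Sp_eq {n : ℕ} (hev : Even n) (p : ℂ[X]) :
    Sp n p = (2 * ((n / 2 : ℕ) : ℂ)) • derivative p + derivative (derivative p) := by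
  have hc : ((n : ℂ) ^ 2 / 4) = ((n / 2 : ℕ) : ℂ) ^ 2 := by
    obtain ⟨k, hk⟩ := hev
    subst hk
    have : (k + k) / 2 = k := by omega
    rw [this]
    push_cast
    ring
  unfold Sp Tp
  rw [hc]
  rw [derivative_add, derivative_smul]
  module

lemma Sp_zero (n : ℕ) : Sp n 0 = 0 := by
  simp [Sp, Tp]

lemma Sp_iter_zero {n : ℕ} (hev : Even n) :
    ∀ (k : ℕ) (p : ℂ[X]), p.degree < (k : ℕ) → (Sp n)^[k] p = 0 := by
  intro k
  induction k with
  | zero =>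
      intro p hp
      have : p = 0 := degree_eq_bot.1 (Nat.WithBot.lt_zero_iff.1 (by exact_mod_cast hp))
      simpa [this]
  | succ k ih =>
      intro p hp
      rw [Function.iterate_succ_apply]
      by_cases h0 : p = 0
      · subst h0
        rw [Sp_zero]
        exact Function.iterate_fixed (Sp_zero n) k
      · apply ih
        have hd1 : (derivative p).degree < p.degree := degree_derivative_lt h0
        have hdp : p.degree ≤ (k : ℕ) := by
          rw [Polynomial.degree_eq_natDegree h0] at hp ⊢
          have : p.natDegree < k + 1 := by exact_mod_cast hp
          exact_mod_cast Nat.lt_succ_iff.1 this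
        have hkd : (derivative p).degree < (k : ℕ) := lt_of_lt_of_le hd1 hdp
        rw [Sp_eq hev]
        refine lt_of_le_of_lt (Polynomial.degree_add_le _ _) (max_lt ?_ ?_)
        · exact lt_of_le_of_lt (degree_smul_le _ _) hkd
        · exact lt_of_le_of_lt (Polynomial.degree_derivative_le) hkd

lemma p_eq_zero_of_R {m : ℕ} {p : ℂ[X]} (hm : (0:ℂ) ≠ (m:ℂ))
    (hR : derivative (derivative p) - ((m : ℂ)) • derivative p = 0)
    (h0 : p.coeff 0 = 0) : p = 0 := by
  have hd : derivative p = 0 := by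
    by_contra hne
    have h1 : (derivative (derivative p)).degree < (derivative p).degree :=
      degree_derivative_lt hne
    have h2 : derivative (derivative p) = ((m : ℂ)) • derivative p := by
      linear_combination (norm := module) hR
    rw [h2, smul_eq_C_mul, degree_C_mul (Ne.symm hm)] at h1
    exact lt_irrefl _ h1
  have := natDegree_eq_zero_of_derivative_eq_zero hd
  rw [eq_C_of_natDegree_eq_zero this, h0, map_zero]

/-- **The broad Picard–Fuchs operator kills no nontrivial logarithmic term**
(Lemma 5.16). Let `n ≥ 4` be even and let
`P_br = (D² − n²/4)^{n/2+1} − 4 nⁿ x^{−n} (D − n/2)(D − n)` with `(D f)(x) = x f′(x)`.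
If `c₁, …, c_{n/2−1} ∈ ℂ` are such that `P_br` applied to
`x ↦ x^{n/2} ∑_{i=1}^{n/2−1} cᵢ (log x)^i` vanishes identically on `(0,∞)`, then all the
`cᵢ` vanish. -/
theorem broad_PF_log_terms_vanish (n : ℕ) (hn : 4 ≤ n) (hev : Even n) (c : ℕ → ℂ)
    (h : ∀ x : ℝ, 0 < x →
      ((fun f : ℝ → ℂ => fun y => Dlog (Dlog f) y - ((n : ℂ) ^ 2 / 4) * f y)^[n / 2 + 1]
          (fun y : ℝ => (y : ℂ) ^ (n / 2) *
            ∑ i ∈ Finset.Icc 1 (n / 2 - 1), c i * (Real.log y : ℂ) ^ i)) x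
        - 4 * (n : ℂ) ^ n * ((x : ℂ) ^ n)⁻¹ *
            DlogShift ((n : ℂ) / 2) (DlogShift (n : ℂ)
              (fun y : ℝ => (y : ℂ) ^ (n / 2) *
                ∑ i ∈ Finset.Icc 1 (n / 2 - 1), c i * (Real.log y : ℂ) ^ i)) x
        = 0) :
    ∀ i ∈ Finset.Icc 1 (n / 2 - 1), c i = 0 := by
  obtain ⟨k, hk⟩ := hev
  have hnk : n = 2 * k := by omega
  set m := n / 2 with hm
  have hmk : m = k := by omega
  have hm2 : 2 ≤ m := by omega
  have hn2 : 2 ≤ n := by omega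
  have hmC : ((m : ℕ) : ℂ) ≠ 0 := Nat.cast_ne_zero.2 (by omega)
  have hhalf : (n : ℂ) / 2 = ((m : ℕ) : ℂ) := by
    rw [hnk, hmk]; push_cast; ring
  have hnc : (n : ℂ) = 2 * ((m : ℕ) : ℂ) := by
    rw [hnk, hmk]; push_cast; ring
  set p : Polynomial ℂ := ∑ i ∈ Finset.Icc 1 (m - 1), Polynomial.C (c i) * Polynomial.X ^ i
    with hp
  have hfun : (fun y : ℝ => (y : ℂ) ^ (n / 2) *
      ∑ i ∈ Finset.Icc 1 (n / 2 - 1), c i * (Real.log y : ℂ) ^ i) = Gfun m p := by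
    funext y
    unfold Gfun
    rw [hp]
    simp [Polynomial.eval_finset_sum]
    rfl
  have hdeg : p.degree < ((m + 1 : ℕ) : WithBot ℕ) := by
    rw [hp]
    refine lt_of_le_of_lt (Polynomial.degree_sum_le _ _) ?_
    rw [Finset.sup_lt_iff (by exact_mod_cast WithBot.bot_lt_coe (m+1))]
    intro i hi
    refine lt_of_le_of_lt (Polynomial.degree_C_mul_X_pow_le i (c i)) ?_
    have : i < m + 1 := by
      have := (Finset.mem_Icc.1 hi).2; omega
    exact_mod_cast this
  -- the second-order piece as a polynomial
  set q₁ : Polynomial ℂ := Tp m p - (n : ℂ) • p with hq1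
  have hq2 : Tp m q₁ - ((n : ℂ) / 2) • q₁ = Polynomial.derivative q₁ := by
    rw [hhalf]
    unfold Tp
    module
  have hdq1 : Polynomial.derivative q₁
      = Polynomial.derivative (Polynomial.derivative p)
        - ((m : ℕ) : ℂ) • Polynomial.derivative p := by
    rw [hq1, hnc]
    unfold Tp
    rw [Polynomial.derivative_sub, Polynomial.derivative_add, Polynomial.derivative_smul,
      Polynomial.derivative_smul]
    module
  -- evaluate the hypothesis
  have hiter : ∀ x : ℝ, 0 < x →
      ((fun f : ℝ → ℂ => fun y => Dlog (Dlog f) y - ((n : ℂ) ^ 2 / 4) * f y)^[n / 2 + 1]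
        (Gfun m p)) x = Gfun m ((Sp n)^[m + 1] p) x := by
    intro x hx
    exact Qop_iter_Gfun hn2 p (m + 1) hx
  have hSzero : (Sp n)^[m + 1] p = 0 := Sp_iter_zero ⟨k, hk⟩ (m + 1) p hdeg
  have hshift : ∀ x : ℝ, 0 < x →
      DlogShift ((n : ℂ) / 2) (DlogShift (n : ℂ) (Gfun m p)) x
        = Gfun m (Polynomial.derivative q₁) x := by
    intro x hx
    rw [dlogShift_congr (fun y hy => dlogShift_Gfun (by omega) (n : ℂ) p hy) hx,
      dlogShift_Gfun (by omega) ((n : ℂ) / 2) q₁ hx, hq2]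
  have heval : ∀ x : ℝ, 0 < x →
      (Polynomial.derivative q₁).eval ((Real.log x : ℝ) : ℂ) = 0 := by
    intro x hx
    have hx0 : (x : ℂ) ≠ 0 := by exact_mod_cast ne_of_gt hx
    have h1 := h x hx
    rw [hfun, hiter x hx, hSzero, hshift x hx] at h1
    unfold Gfun at h1
    simp only [Polynomial.eval_zero, mul_zero, zero_sub, neg_eq_zero] at h1
    have hnn : (4 : ℂ) * (n : ℂ) ^ n * ((x : ℂ) ^ n)⁻¹ ≠ 0 := by
      apply mul_ne_zero (mul_ne_zero (by norm_num) (pow_ne_zero _ (by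
        exact_mod_cast Nat.cast_ne_zero.2 (by omega : n ≠ 0))))
      exact inv_ne_zero (pow_ne_zero _ hx0)
    have hxm : (x : ℂ) ^ m ≠ 0 := pow_ne_zero _ hx0
    rcases mul_eq_zero.1 h1 with h2 | h2
    · exact absurd h2 hnn
    · rcases mul_eq_zero.1 h2 with h3 | h3
      · exact absurd h3 hxm
      · exact h3
  have hroots : Polynomial.derivative q₁ = 0 := by
    apply Polynomial.eq_zero_of_infinite_isRoot
    apply Set.infinite_of_injective_forall_mem (f := fun j : ℕ => ((j : ℝ) : ℂ))
    · intro a b hab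
      simp only at hab
      exact_mod_cast hab
    · intro j
      have : ((j : ℝ) : ℂ) = ((Real.log (Real.exp j) : ℝ) : ℂ) := by
        rw [Real.log_exp]
      rw [Set.mem_setOf_eq, Polynomial.IsRoot, this]
      exact heval _ (Real.exp_pos _)
  have hp0 : p = 0 := by
    apply p_eq_zero_of_R (Ne.symm hmC)
    · rw [← hdq1]; exact hroots
    · rw [hp, Polynomial.finset_sum_coeff]
      apply Finset.sum_eq_zero
      intro i hi
      have hi1 : 1 ≤ i := (Finset.mem_Icc.1 hi).1
      rw [Polynomial.coeff_C_mul, Polynomial.coeff_X_pow, if_neg (by omega : ¬ (0 = i)), mul_zero]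
  intro i hi
  have hci : p.coeff i = c i := by
    rw [hp, Polynomial.finset_sum_coeff]
    rw [Finset.sum_eq_single i]
    · simp
    · intro j hj hji
      rw [Polynomial.coeff_C_mul, Polynomial.coeff_X_pow, if_neg (Ne.symm hji), mul_zero]
    · intro hni
      exact absurd hi hni
  rw [← hci, hp0, Polynomial.coeff_zero]
end
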